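/- Fix a nonzero real number λ. In ℝ[[t]]: −(1−t)^{−1} · log_λ(1−t) = Σ_{n=1}^{∞} H_{n,λ} t^n, i.e., for every n ≥ 1 the coefficient of t^n in −log_λ(1−t)/(1−t) is the degenerate harmonic number H_{n,λ}. -/

import Mathlib

open Finset PowerSeries

noncomputable section

/-- The generalized binomial coefficient `C(x,k) = x(x-1)⋯(x-k+1)/k!`. -/
def gbinom (x : ℝ) (k : ℕ) : ℝ := (∏ i ∈ Finset.range k, (x - i)) / k.factorial

/-- The degenerate harmonic numbers `H_{n,λ} = ∑_{k=1}^n (-1)^{k-1} (1/λ) C(λ,k)`,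
with `H_{0,λ} = 0`. -/
def dH (lam : ℝ) (n : ℕ) : ℝ :=
  ∑ k ∈ Finset.Icc 1 n, (-1 : ℝ) ^ (k - 1) * (1 / lam) * gbinom lam k

/-- The degenerate logarithm evaluated at `1 - t`: the formal power series
`log_λ(1-t) = ∑_{n≥1} (1/λ) C(λ,n) (-t)^n` in `ℝ[[t]]`. -/
def dlogNeg (lam : ℝ) : PowerSeries ℝ :=
  PowerSeries.mk fun n => if n = 0 then 0 else (-1 : ℝ) ^ n * (1 / lam) * gbinom lam n

lemma key (lam : ℝ) :
    dlogNeg lam = (1 - PowerSeries.X) * (-(PowerSeries.mk fun n => dH lam n)) := by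
  ext n
  rw [sub_mul, one_mul]
  cases n with
  | zero =>
    simp [dlogNeg, dH, PowerSeries.coeff_zero_eq_constantCoeff]
  | succ m =>
    rw [map_sub, PowerSeries.coeff_succ_X_mul]
    simp only [dlogNeg, PowerSeries.coeff_mk, map_neg, Nat.succ_ne_zero, if_false]
    have : dH lam (m + 1) = dH lam m + (-1 : ℝ) ^ m * (1 / lam) * gbinom lam (m + 1) := by
      rw [dH, dH, Finset.sum_Icc_succ_top (by omega : 1 ≤ m + 1)]
      simp
    rw [this]
    ring

theorem statement_14 (lam : ℝ) (hlam : lam ≠ 0) :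
    -((1 - PowerSeries.X : PowerSeries ℝ)⁻¹ * dlogNeg lam) =
      PowerSeries.mk fun n => dH lam n := by
  have hu : PowerSeries.constantCoeff (1 - PowerSeries.X : PowerSeries ℝ) ≠ 0 := by simp
  rw [key lam, ← mul_assoc, PowerSeries.inv_mul_cancel _ hu]
  ring
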